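/- Let 𝕂 = ℝ or ℂ, let Ω = 𝕂^{ℤ₊} with the product topology and product σ-algebra, let μ = ⊗_{n≥0} μ_n be a product probability measure on Ω, and let w = (w_n)_{n≥1} be a sequence of non-zero scalars. Let B_w : Ω → Ω be the weighted backward shift defined by (B_w t)_n = w_{n+1} t_{n+1} for n ≥ 0. Then μ is B_w-invariant if and only if, for each n ≥ 1, the measure μ_n is the image of μ₀ under the map t ↦ t/(w₁⋯w_n), i.e. μ_n(A) = μ₀(w₁⋯w_n · A) for every Borel set A ⊆ 𝕂. -/

import Mathlib

open MeasureTheory Filter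
open scoped ENNReal

section Aux

variable {𝕂 : Type*} [MeasurableSpace 𝕂]

/-- The collection of cylinder sets. -/
def Cyl (𝕂 : Type*) [MeasurableSpace 𝕂] : Set (Set (ℕ → 𝕂)) :=
  {B | ∃ N : ℕ, ∃ A : ℕ → Set 𝕂, (∀ n, MeasurableSet (A n)) ∧
    B = {t | ∀ n ≤ N, t n ∈ A n}}

lemma cyl_measurableSet {N : ℕ} {A : ℕ → Set 𝕂} (hA : ∀ n, MeasurableSet (A n)) :
    MeasurableSet {t : ℕ → 𝕂 | ∀ n ≤ N, t n ∈ A n} := by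
  have h : {t : ℕ → 𝕂 | ∀ n ≤ N, t n ∈ A n}
      = ⋂ n ∈ Finset.range (N + 1), (fun t : ℕ → 𝕂 => t n) ⁻¹' A n := by
    ext t; simp [Nat.lt_succ_iff]
  rw [h]
  exact MeasurableSet.biInter (Finset.range (N + 1)).countable_toSet
    fun n _ => measurable_pi_apply n (hA n)

lemma isPiSystem_cyl : IsPiSystem (Cyl 𝕂) := by
  rintro _ ⟨N, A, hA, rfl⟩ _ ⟨M, B, hB, rfl⟩ -
  refine ⟨max N M, fun n => (if n ≤ N then A n else Set.univ) ∩
      (if n ≤ M then B n else Set.univ), fun n => ?_, ?_⟩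
  · refine MeasurableSet.inter ?_ ?_ <;> split_ifs <;>
      first | exact hA _ | exact hB _ | exact MeasurableSet.univ
  · ext t
    simp only [Set.mem_inter_iff, Set.mem_setOf_eq]
    constructor
    · rintro ⟨h1, h2⟩ n hn
      constructor <;> split_ifs with h
      · exact h1 n h
      · trivial
      · exact h2 n h
      · trivial
    · intro h
      constructor
      · intro n hn
        have := (h n (le_trans hn (le_max_left N M))).1
        simpa [hn] using this
      · intro n hn
        have := (h n (le_trans hn (le_max_right N M))).2
        simpa [hn] using this

lemma generateFrom_cyl :
    (inferInstance : MeasurableSpace (ℕ → 𝕂)) = MeasurableSpace.generateFrom (Cyl 𝕂) := by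
  refine le_antisymm ?_ ?_
  · -- pi ≤ generateFrom
    have h : ∀ i : ℕ, @Measurable (ℕ → 𝕂) 𝕂 (MeasurableSpace.generateFrom (Cyl 𝕂)) _
        (fun t => t i) := by
      intro i S hS
      have hmem : (fun t : ℕ → 𝕂 => t i) ⁻¹' S ∈ Cyl 𝕂 := by
        refine ⟨i, fun n => if n = i then S else Set.univ, fun n => ?_, ?_⟩
        · by_cases h : n = i <;> simp [h, hS]
        · ext t
          simp only [Set.mem_preimage, Set.mem_setOf_eq]
          constructor
          · intro h n hn
            split_ifs with he
            · subst he; exact h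
            · trivial
          · intro h
            have := h i le_rfl
            simpa using this
      exact MeasurableSpace.measurableSet_generateFrom hmem
    exact iSup_le fun i => measurable_iff_comap_le.mp (h i)
  · refine MeasurableSpace.generateFrom_le ?_
    rintro _ ⟨N, A, hA, rfl⟩
    exact cyl_measurableSet hA

end Aux

/-- `μ` is the product measure ... -/
def IsProductMeasure {𝕂 : Type*} [MeasurableSpace 𝕂]
    (μ : Measure (ℕ → 𝕂)) (μn : ℕ → Measure 𝕂) : Prop :=
  ∀ (N : ℕ) (A : ℕ → Set 𝕂), (∀ n, MeasurableSet (A n)) →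
    μ {t | ∀ n ≤ N, t n ∈ A n} = ∏ n ∈ Finset.range (N + 1), μn n (A n)

theorem product_measure_invariant_iff
    {𝕂 : Type*} [RCLike 𝕂] [MeasurableSpace 𝕂] [BorelSpace 𝕂]
    (μ : Measure (ℕ → 𝕂)) [IsProbabilityMeasure μ]
    (μn : ℕ → Measure 𝕂) (hμn : ∀ n, IsProbabilityMeasure (μn n))
    (hμ : IsProductMeasure μ μn)
    (w : ℕ → 𝕂) (hw0 : ∀ n, 1 ≤ n → w n ≠ 0) :
    (∀ B : Set (ℕ → 𝕂), MeasurableSet B →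
        μ ((fun t (n : ℕ) => w (n + 1) * t (n + 1)) ⁻¹' B) = μ B) ↔
      (∀ n : ℕ, 1 ≤ n → ∀ A : Set 𝕂, MeasurableSet A →
        μn n A = μn 0 ((fun t => (∏ i ∈ Finset.Icc 1 n, w i) * t) '' A)) := by
  classical
  set Bw : (ℕ → 𝕂) → (ℕ → 𝕂) := fun t n => w (n + 1) * t (n + 1) with hBw
  have hBwm : Measurable Bw :=
    measurable_pi_iff.mpr fun n => by rw [hBw]; exact (measurable_pi_apply (n + 1) : Measurable fun t : ℕ → 𝕂 => t (n + 1)).const_mul (w (n + 1))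
  set W : ℕ → 𝕂 := fun n => ∏ i ∈ Finset.Icc 1 n, w i with hWdef
  have hWsucc : ∀ n, W (n + 1) = W n * w (n + 1) := fun n =>
    Finset.prod_Icc_succ_top (Nat.le_add_left 1 n) w
  have hWne : ∀ n, W n ≠ 0 := by
    intro n
    refine Finset.prod_ne_zero_iff.mpr ?_
    intro i hi
    exact hw0 i (Finset.mem_Icc.mp hi).1
  -- image = preimage under inverse multiplication
  have himg : ∀ (n : ℕ) (A : Set 𝕂),
      (fun t => W n * t) '' A = (fun t => (W n)⁻¹ * t) ⁻¹' A := by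
    intro n A
    ext x
    simp only [Set.mem_image, Set.mem_preimage]
    constructor
    · rintro ⟨a, ha, rfl⟩
      simpa [inv_mul_cancel_left₀ (hWne n)] using ha
    · intro hx
      exact ⟨(W n)⁻¹ * x, hx, by rw [mul_inv_cancel_left₀ (hWne n)]⟩
  -- the preimage of a cylinder under Bw is a cylinder
  have hpre : ∀ (N : ℕ) (A : ℕ → Set 𝕂),
      Bw ⁻¹' {t | ∀ n ≤ N, t n ∈ A n}
        = {t | ∀ n ≤ N + 1, t n ∈ (fun k => match k with
            | 0 => (Set.univ : Set 𝕂)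
            | j + 1 => (fun x => w (j + 1) * x) ⁻¹' A j) n} := by
    intro N A
    ext t
    simp only [Set.mem_preimage, Set.mem_setOf_eq]
    constructor
    · intro h n hn
      match n with
      | 0 => trivial
      | j + 1 => exact h j (by omega)
    · intro h n hn
      exact h (n + 1) (by omega)
  -- the key intermediate property
  set P : Prop := ∀ (m : ℕ) (S : Set 𝕂), MeasurableSet S →
      μn (m + 1) ((fun x => w (m + 1) * x) ⁻¹' S) = μn m S with hPdef
  -- invariance → P
  have h1 : (∀ B : Set (ℕ → 𝕂), MeasurableSet B → μ (Bw ⁻¹' B) = μ B) → P := by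
    intro hinv m S hS
    set A : ℕ → Set 𝕂 := fun k => if k = m then S else Set.univ with hA
    have hAm : ∀ n, MeasurableSet (A n) := by
      intro n; simp only [hA]; split_ifs <;> simp [hS]
    have hB : MeasurableSet {t : ℕ → 𝕂 | ∀ n ≤ m, t n ∈ A n} := cyl_measurableSet hAm
    have h2 := hinv _ hB
    rw [hpre m A, hμ m A hAm] at h2
    set A' : ℕ → Set 𝕂 := fun k => match k with
      | 0 => (Set.univ : Set 𝕂)
      | j + 1 => (fun x => w (j + 1) * x) ⁻¹' A j with hA'
    have hA'm : ∀ n, MeasurableSet (A' n) := by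
      intro n
      match n with
      | 0 => exact MeasurableSet.univ
      | j + 1 => exact (measurable_const_mul (w (j + 1))) (hAm j)
    rw [hμ (m + 1) A' hA'm] at h2
    have hL : ∏ n ∈ Finset.range (m + 2), μn n (A' n)
        = μn (m + 1) ((fun x => w (m + 1) * x) ⁻¹' S) := by
      rw [Finset.prod_eq_single_of_mem (m + 1) (by simp [Finset.mem_range])]
      · congr 1
        simp [hA', hA]
      · intro b hb hbne
        match b with
        | 0 => simp [hA']
        | j + 1 =>
          have hj : j ≠ m := by omega
          have : A' (j + 1) = Set.univ := by simp [hA', hA, hj]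
          rw [this]; exact measure_univ
    have hR : ∏ n ∈ Finset.range (m + 1), μn n (A n) = μn m S := by
      rw [Finset.prod_eq_single_of_mem m (by simp)]
      · congr 1; simp [hA]
      · intro b hb hbne
        have : A b = Set.univ := by simp [hA, hbne]
        rw [this]; exact measure_univ
    rw [hL, hR] at h2
    exact h2
  -- P → invariance
  have h2 : P → (∀ B : Set (ℕ → 𝕂), MeasurableSet B → μ (Bw ⁻¹' B) = μ B) := by
    intro hP
    have hmap : Measure.map Bw μ = μ := by
      have : IsProbabilityMeasure (Measure.map Bw μ) := Measure.isProbabilityMeasure_map hBwm.aemeasurable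
      refine ext_of_generate_finite (Cyl 𝕂) generateFrom_cyl isPiSystem_cyl ?_ ?_
      · rintro _ ⟨N, A, hAm, rfl⟩
        rw [Measure.map_apply hBwm (cyl_measurableSet hAm), hpre N A]
        set A' : ℕ → Set 𝕂 := fun k => match k with
          | 0 => (Set.univ : Set 𝕂)
          | j + 1 => (fun x => w (j + 1) * x) ⁻¹' A j with hA'
        have hA'm : ∀ n, MeasurableSet (A' n) := by
          intro n
          match n with
          | 0 => exact MeasurableSet.univ
          | j + 1 => exact (measurable_const_mul (w (j + 1))) (hAm j)
        rw [hμ (N + 1) A' hA'm, hμ N A hAm]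
        rw [Finset.prod_range_succ']
        have : ∀ k ∈ Finset.range (N + 1), μn (k + 1) (A' (k + 1)) = μn k (A k) := by
          intro k _
          exact hP k (A k) (hAm k)
        rw [Finset.prod_congr rfl this]
        have : μn 0 (A' 0) = 1 := by
          have : A' 0 = Set.univ := rfl
          rw [this]; exact measure_univ
        rw [this, mul_one]
      · simp [measure_univ]
    intro B hB
    rw [← Measure.map_apply hBwm hB, hmap]
  -- P ↔ statement with preimages at all n (including 0)
  have hQ0 : P → ∀ (n : ℕ) (A : Set 𝕂), MeasurableSet A →
      μn n A = μn 0 ((fun t => (W n)⁻¹ * t) ⁻¹' A) := by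
    intro hP n
    induction n with
    | zero =>
      intro A hA
      have : (fun t : 𝕂 => (W 0)⁻¹ * t) ⁻¹' A = A := by
        have hW0 : W 0 = 1 := by simp [hWdef]
        ext x; simp [hW0]
      rw [this]
    | succ n ih =>
      intro A hA
      have hw : w (n + 1) ≠ 0 := hw0 (n + 1) (by omega)
      have hS : MeasurableSet ((fun x : 𝕂 => (w (n + 1))⁻¹ * x) ⁻¹' A) :=
        (measurable_const_mul _) hA
      have key := hP n _ hS
      have hcomp : (fun x : 𝕂 => w (n + 1) * x) ⁻¹' ((fun x : 𝕂 => (w (n + 1))⁻¹ * x) ⁻¹' A) = A := by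
        ext x; simp [inv_mul_cancel_left₀ hw]
      rw [hcomp] at key
      rw [key, ih _ hS]
      congr 1
      ext x
      simp only [Set.mem_preimage]
      have : (w (n + 1))⁻¹ * ((W n)⁻¹ * x) = (W (n + 1))⁻¹ * x := by
        rw [hWsucc, mul_inv]; ring
      rw [← this]
  have hQ0' : (∀ (n : ℕ) (A : Set 𝕂), MeasurableSet A →
      μn n A = μn 0 ((fun t => (W n)⁻¹ * t) ⁻¹' A)) → P := by
    intro hQ m S hS
    have hw : w (m + 1) ≠ 0 := hw0 (m + 1) (by omega)
    have hS' : MeasurableSet ((fun x : 𝕂 => w (m + 1) * x) ⁻¹' S) :=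
      (measurable_const_mul _) hS
    rw [hQ (m + 1) _ hS', hQ m S hS]
    congr 1
    ext x
    simp only [Set.mem_preimage]
    have : w (m + 1) * ((W (m + 1))⁻¹ * x) = (W m)⁻¹ * x := by
      rw [hWsucc]
      field_simp
    rw [this]
  constructor
  · intro hinv n hn A hA
    rw [himg n A]
    exact hQ0 (h1 hinv) n A hA
  · intro hQ
    refine h2 (hQ0' ?_)
    intro n A hA
    match n with
    | 0 =>
      have hW0 : W 0 = 1 := by simp [hWdef]
      have : (fun t : 𝕂 => (W 0)⁻¹ * t) ⁻¹' A = A := by ext x; simp [hW0]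
      rw [this]
    | n + 1 =>
      rw [hQ (n + 1) (by omega) A hA, himg (n + 1) A]
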